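/- Let Q be a full conjunctive query with multi-hypergraph H = ([n], E) and finite input relations R_F for F ∈ E, let N = max_{F∈E} |R_F|, and let ρ*(H) be the fractional edge cover number of H (the minimum of ∑_{F∈E} δ_F over all fractional edge covers δ of H). Then |Q| ≤ N^{ρ*(H)}. -/

import Mathlib

open Finset MeasureTheory
open scoped ENNReal

lemma holder_fin {κ : Type*} (s : Finset κ) {m : ℕ} (x : κ → Fin m → ℝ≥0∞)
    {p : κ → ℝ} (hp : ∑ i ∈ s, p i = 1) (h0 : ∀ i ∈ s, 0 ≤ p i) :
    ∑ t, ∏ i ∈ s, x i t ^ p i ≤ ∏ i ∈ s, (∑ t, x i t) ^ p i := by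
  have h := ENNReal.lintegral_prod_norm_pow_le (μ := Measure.count (α := Fin m)) s
    (f := x) (fun i _ => (Measurable.of_discrete).aemeasurable) hp h0
  simpa [MeasureTheory.lintegral_count, tsum_fintype] using h

lemma holder_sum_eq_one {κ τ : Type*} (s : Finset κ) (T : Finset τ) (x : κ → τ → ℝ≥0∞)
    {p : κ → ℝ} (hp : ∑ i ∈ s, p i = 1) (h0 : ∀ i ∈ s, 0 ≤ p i) :
    ∑ t ∈ T, ∏ i ∈ s, x i t ^ p i ≤ ∏ i ∈ s, (∑ t ∈ T, x i t) ^ p i := by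
  classical
  have e := T.equivFin
  have key : ∀ f : τ → ℝ≥0∞, ∑ t ∈ T, f t = ∑ j : Fin T.card, f (e.symm j) := by
    intro f
    rw [← Finset.sum_coe_sort T f, ← Equiv.sum_comp e.symm (fun t : T => f t.val)]
  simp only [key]
  exact holder_fin s (fun i j => x i (e.symm j)) hp h0

lemma prod_rpow_const {κ : Type*} (s : Finset κ) (x : ℝ≥0∞) {p : κ → ℝ}
    (h0 : ∀ i ∈ s, 0 ≤ p i) :
    ∏ i ∈ s, x ^ p i = x ^ (∑ i ∈ s, p i) := by
  classical
  induction s using Finset.induction_on with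
  | empty => simp
  | insert _ _ hni ih =>
    rename_i a s'
    rw [Finset.prod_insert hni, Finset.sum_insert hni,
      ENNReal.rpow_add_of_nonneg _ _ (h0 a (mem_insert_self a s'))
        (Finset.sum_nonneg fun i hi => h0 i (mem_insert_of_mem hi)),
      ih (fun i hi => h0 i (mem_insert_of_mem hi))]

lemma holder_sum_ge_one {κ τ : Type*} (s : Finset κ) (T : Finset τ) (x : κ → τ → ℝ≥0∞)
    {p : κ → ℝ} (hp : 1 ≤ ∑ i ∈ s, p i) (h0 : ∀ i ∈ s, 0 ≤ p i) :
    ∑ t ∈ T, ∏ i ∈ s, x i t ^ p i ≤ ∏ i ∈ s, (∑ t ∈ T, x i t) ^ p i := by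
  classical
  set c : ℝ := ∑ i ∈ s, p i with hc
  have hc0 : 0 < c := lt_of_lt_of_le one_pos hp
  set S : κ → ℝ≥0∞ := fun i => ∑ t ∈ T, x i t with hS
  have hdiv0 : ∀ i ∈ s, 0 ≤ p i / c := fun i hi => div_nonneg (h0 i hi) hc0.le
  have hsub0 : ∀ i ∈ s, 0 ≤ p i - p i / c := fun i hi =>
    sub_nonneg.mpr (div_le_self (h0 i hi) hp)
  have hxS : ∀ i ∈ s, ∀ t ∈ T, x i t ≤ S i := fun i hi t ht =>
    Finset.single_le_sum (fun t _ => zero_le) ht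
  have point : ∀ t ∈ T, ∏ i ∈ s, x i t ^ p i ≤
      (∏ i ∈ s, S i ^ (p i - p i / c)) * ∏ i ∈ s, x i t ^ (p i / c) := by
    intro t ht
    rw [← Finset.prod_mul_distrib]
    refine Finset.prod_le_prod' fun i hi => ?_
    calc x i t ^ p i = x i t ^ (p i - p i / c + p i / c) := by ring_nf
      _ = x i t ^ (p i - p i / c) * x i t ^ (p i / c) :=
          ENNReal.rpow_add_of_nonneg _ _ (hsub0 i hi) (hdiv0 i hi)
      _ ≤ S i ^ (p i - p i / c) * x i t ^ (p i / c) :=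
          mul_le_mul_left (ENNReal.rpow_le_rpow (hxS i hi t ht) (hsub0 i hi)) _
  calc ∑ t ∈ T, ∏ i ∈ s, x i t ^ p i
      ≤ ∑ t ∈ T, (∏ i ∈ s, S i ^ (p i - p i / c)) * ∏ i ∈ s, x i t ^ (p i / c) :=
        Finset.sum_le_sum point
    _ = (∏ i ∈ s, S i ^ (p i - p i / c)) * ∑ t ∈ T, ∏ i ∈ s, x i t ^ (p i / c) := by
        rw [Finset.mul_sum]
    _ ≤ (∏ i ∈ s, S i ^ (p i - p i / c)) * ∏ i ∈ s, S i ^ (p i / c) := by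
        gcongr
        exact holder_sum_eq_one s T x (by rw [← Finset.sum_div, ← hc, div_self hc0.ne']) hdiv0
    _ = ∏ i ∈ s, S i ^ (p i - p i / c) * S i ^ (p i / c) := by rw [Finset.prod_mul_distrib]
    _ = ∏ i ∈ s, S i ^ p i := by
        refine Finset.prod_congr rfl fun i hi => ?_
        rw [← ENNReal.rpow_add_of_nonneg _ _ (hsub0 i hi) (hdiv0 i hi)]
        ring_nf
open Finset
open scoped ENNReal

section
variable {n : ℕ} {Dom : Fin n → Type*} {ι : Type*}

open Classical in
/-- Projection of a set of tuples onto coordinates `F e`, revealing only the values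
at coordinates in `V`. -/
noncomputable def proj (F : ι → Finset (Fin n)) (e : ι) (V : Finset (Fin n))
    (S : Finset (∀ i, Dom i)) : Finset ((i : {x // x ∈ F e}) → Option (Dom i.val)) :=
  S.image (fun a i => if i.val ∈ V then some (a i.val) else none)

lemma proj_mono (F : ι → Finset (Fin n)) (e : ι) (V : Finset (Fin n))
    {S S' : Finset (∀ i, Dom i)} (h : S ⊆ S') : proj F e V S ⊆ proj F e V S' := by
  classical
  rw [proj, proj]
  exact Finset.image_subset_image h

lemma proj_nonempty (F : ι → Finset (Fin n)) (e : ι) (V : Finset (Fin n))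
    {S : Finset (∀ i, Dom i)} (h : S.Nonempty) : (proj F e V S).Nonempty := by
  classical
  rw [proj]; exact h.image _

lemma proj_not_mem (F : ι → Finset (Fin n)) (e : ι) {v : Fin n} (V : Finset (Fin n))
    (hve : v ∉ F e) (S : Finset (∀ i, Dom i)) :
    proj F e (insert v V) S = proj F e V S := by
  classical
  rw [proj, proj]
  apply Finset.image_congr
  intro a _
  funext i
  have hiv : i.val ≠ v := fun h => hve (h ▸ i.2)
  simp [Finset.mem_insert, hiv]

lemma card_proj_le_of_subset (F : ι → Finset (Fin n)) (e : ι) {V' V : Finset (Fin n)}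
    (h : V' ⊆ V) (S : Finset (∀ i, Dom i)) :
    (proj F e V' S).card ≤ (proj F e V S).card := by
  classical
  have heq : proj F e V' S =
      (proj F e V S).image (fun g (i : {x // x ∈ F e}) => if i.val ∈ V' then g i else none) := by
    rw [proj, proj, Finset.image_image]
    apply Finset.image_congr
    intro a _
    funext i
    by_cases hi : i.val ∈ V'
    · simp [Function.comp, hi, h hi]
    · simp [Function.comp, hi]
  rw [heq]
  exact Finset.card_image_le

open Classical in
lemma sum_card_proj_fiber (F : ι → Finset (Fin n)) (e : ι) {v : Fin n} {V : Finset (Fin n)}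
    (hve : v ∈ F e) (hvV : v ∈ V) (S : Finset (∀ i, Dom i)) :
    ∑ t ∈ S.image (fun a => a v),
      (proj F e V (S.filter (fun a => a v = t))).card = (proj F e V S).card := by
  classical
  have hdecomp : proj F e V S =
      (S.image (fun a => a v)).biUnion
        (fun t => proj F e V (S.filter (fun a => a v = t))) := by
    apply Finset.Subset.antisymm
    · intro g hg
      rw [proj, Finset.mem_image] at hg
      obtain ⟨a, ha, rfl⟩ := hg
      rw [Finset.mem_biUnion]
      exact ⟨a v, Finset.mem_image_of_mem _ ha,
        by rw [proj]; exact Finset.mem_image_of_mem _ (Finset.mem_filter.mpr ⟨ha, rfl⟩)⟩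
    · intro g hg
      rw [Finset.mem_biUnion] at hg
      obtain ⟨t, _, hgt⟩ := hg
      exact proj_mono F e V (Finset.filter_subset _ _) hgt
  rw [hdecomp, Finset.card_biUnion]
  intro t1 h1 t2 h2 hne
  rw [Function.onFun, Finset.disjoint_left]
  intro g hg1 hg2
  rw [proj, Finset.mem_image] at hg1 hg2
  obtain ⟨a, ha, rfl⟩ := hg1
  obtain ⟨b, hb, hba⟩ := hg2
  have h1v : a v = t1 := (Finset.mem_filter.mp ha).2
  have h2v : b v = t2 := (Finset.mem_filter.mp hb).2
  have := congrFun hba ⟨v, hve⟩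
  simp only [hvV, if_pos] at this
  exact hne (by rw [← h1v, ← h2v, Option.some_inj.mp this])

end

section
variable {n : ℕ} {Dom : Fin n → Type*} {ι : Type*}

lemma agm_key [Fintype ι] (F : ι → Finset (Fin n)) (δ : ι → ℝ) (hδ : ∀ e, 0 ≤ δ e)
    (V : Finset (Fin n))
    (hcov : ∀ v ∈ V, 1 ≤ ∑ e ∈ Finset.univ.filter (fun e => v ∈ F e), δ e)
    (S : Finset (∀ i, Dom i))
    (hdet : ∀ a ∈ S, ∀ b ∈ S, (∀ i ∈ V, a i = b i) → a = b) :
    (S.card : ℝ≥0∞) ≤ ∏ e : ι, ((proj F e V S).card : ℝ≥0∞) ^ δ e := by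
  classical
  induction V using Finset.induction_on generalizing S with
  | empty =>
    rcases S.eq_empty_or_nonempty with rfl | hSne
    · simp
    · have h1 : S.card ≤ 1 :=
        Finset.card_le_one.mpr (fun a ha b hb => hdet a ha b hb (by simp))
      calc (S.card : ℝ≥0∞) ≤ 1 := by exact_mod_cast h1
        _ ≤ ∏ e : ι, ((proj F e ∅ S).card : ℝ≥0∞) ^ δ e := by
          refine Finset.one_le_prod' fun e _ => ?_
          have hne : 1 ≤ (proj F e ∅ S).card :=
            Finset.card_pos.mpr (proj_nonempty F e ∅ hSne)
          calc (1:ℝ≥0∞) = 1 ^ δ e := (ENNReal.one_rpow _).symm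
            _ ≤ _ := ENNReal.rpow_le_rpow (by exact_mod_cast hne) (hδ e)
  | @insert v V' hv ih =>
    set V : Finset (Fin n) := insert v V' with hV
    set T : Finset (Dom v) := S.image (fun a => a v) with hT
    set St : Dom v → Finset (∀ i, Dom i) := fun t => S.filter (fun a => a v = t) with hSt
    have hcard : S.card = ∑ t ∈ T, (St t).card :=
      Finset.card_eq_sum_card_fiberwise (fun a ha => Finset.mem_image_of_mem _ ha)
    have hcov' : ∀ u ∈ V', 1 ≤ ∑ e ∈ Finset.univ.filter (fun e => u ∈ F e), δ e :=
      fun u hu => hcov u (Finset.mem_insert_of_mem hu)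
    have hdet' : ∀ t, ∀ a ∈ St t, ∀ b ∈ St t, (∀ i ∈ V', a i = b i) → a = b := by
      intro t a ha b hb hab
      have haS := Finset.mem_filter.mp ha
      have hbS := Finset.mem_filter.mp hb
      refine hdet a haS.1 b hbS.1 (fun i hi => ?_)
      rcases Finset.mem_insert.mp hi with rfl | hi'
      · rw [haS.2, hbS.2]
      · exact hab i hi'
    have hIH : ∀ t ∈ T, ((St t).card : ℝ≥0∞) ≤
        ∏ e : ι, ((proj F e V' (St t)).card : ℝ≥0∞) ^ δ e :=
      fun t _ => ih hcov' (St t) (hdet' t)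
    set P : ι → ℝ≥0∞ := fun e => ((proj F e V S).card : ℝ≥0∞) with hP
    set Ev : Finset ι := Finset.univ.filter (fun e => v ∈ F e) with hEv
    -- bound for edges not containing v
    have hnotv : ∀ e ∈ Finset.univ.filter (fun e => ¬ v ∈ F e), ∀ t ∈ T,
        ((proj F e V' (St t)).card : ℝ≥0∞) ≤ P e := by
      intro e he t _
      have hve : v ∉ F e := by simpa using (Finset.mem_filter.mp he).2
      have : proj F e V' (St t) ⊆ proj F e V S := by
        rw [hV, proj_not_mem F e V' hve]
        exact proj_mono F e V' (Finset.filter_subset _ _)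
      simp only [hP]
      exact_mod_cast Finset.card_le_card this
    -- bound for edges containing v
    have hsumv : ∀ e ∈ Ev, ∑ t ∈ T, ((proj F e V' (St t)).card : ℝ≥0∞) ≤ P e := by
      intro e he
      have hve : v ∈ F e := by simpa [hEv] using he
      have step1 : ∀ t ∈ T, (proj F e V' (St t)).card ≤ (proj F e V (St t)).card :=
        fun t _ => card_proj_le_of_subset F e (Finset.subset_insert v V') (St t)
      have step2 : ∑ t ∈ T, (proj F e V (St t)).card = (proj F e V S).card :=
        sum_card_proj_fiber F e hve (Finset.mem_insert_self v V') S
      calc ∑ t ∈ T, ((proj F e V' (St t)).card : ℝ≥0∞)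
          ≤ ∑ t ∈ T, ((proj F e V (St t)).card : ℝ≥0∞) := by
            exact_mod_cast Finset.sum_le_sum step1
        _ = P e := by simp only [hP]; exact_mod_cast congrArg (Nat.cast : ℕ → ℝ≥0∞) step2
    have hδv : 1 ≤ ∑ e ∈ Ev, δ e := hcov v (Finset.mem_insert_self v V')
    calc (S.card : ℝ≥0∞) = ∑ t ∈ T, ((St t).card : ℝ≥0∞) := by
          rw [hcard]; exact_mod_cast rfl
      _ ≤ ∑ t ∈ T, ∏ e : ι, ((proj F e V' (St t)).card : ℝ≥0∞) ^ δ e :=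
          Finset.sum_le_sum hIH
      _ = ∑ t ∈ T, (∏ e ∈ Ev, ((proj F e V' (St t)).card : ℝ≥0∞) ^ δ e) *
            ∏ e ∈ Finset.univ.filter (fun e => ¬ v ∈ F e),
              ((proj F e V' (St t)).card : ℝ≥0∞) ^ δ e := by
          refine Finset.sum_congr rfl fun t _ => ?_
          rw [hEv, Finset.prod_filter_mul_prod_filter_not]
      _ ≤ ∑ t ∈ T, (∏ e ∈ Ev, ((proj F e V' (St t)).card : ℝ≥0∞) ^ δ e) *
            ∏ e ∈ Finset.univ.filter (fun e => ¬ v ∈ F e), P e ^ δ e := by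
          refine Finset.sum_le_sum fun t ht => ?_
          refine mul_le_mul_right (Finset.prod_le_prod' fun e he => ?_) _
          exact ENNReal.rpow_le_rpow (hnotv e he t ht) (hδ e)
      _ = (∏ e ∈ Finset.univ.filter (fun e => ¬ v ∈ F e), P e ^ δ e) *
            ∑ t ∈ T, ∏ e ∈ Ev, ((proj F e V' (St t)).card : ℝ≥0∞) ^ δ e := by
          rw [Finset.mul_sum]
          exact Finset.sum_congr rfl fun t _ => mul_comm _ _
      _ ≤ (∏ e ∈ Finset.univ.filter (fun e => ¬ v ∈ F e), P e ^ δ e) *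
            ∏ e ∈ Ev, (∑ t ∈ T, ((proj F e V' (St t)).card : ℝ≥0∞)) ^ δ e := by
          refine mul_le_mul_right ?_ _
          exact holder_sum_ge_one Ev T
            (fun e t => ((proj F e V' (St t)).card : ℝ≥0∞)) hδv (fun e _ => hδ e)
      _ ≤ (∏ e ∈ Finset.univ.filter (fun e => ¬ v ∈ F e), P e ^ δ e) *
            ∏ e ∈ Ev, P e ^ δ e := by
          refine mul_le_mul_right (Finset.prod_le_prod' fun e he => ?_) _
          exact ENNReal.rpow_le_rpow (hsumv e he) (hδ e)
      _ = ∏ e : ι, P e ^ δ e := by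
          rw [mul_comm, hEv, Finset.prod_filter_mul_prod_filter_not]
end
open Finset
open scoped ENNReal

/-- **AGM bound via the fractional edge cover number.** With `N` the maximum
relation size and `ρ*` the fractional edge cover number of the query hypergraph
(whose edges are nonempty and cover all the vertices), `|Q| ≤ N ^ ρ*`. -/
theorem agm_bound_fractional_cover_number
    {n : ℕ} (hn : 1 ≤ n) (Dom : Fin n → Type*)
    {ι : Type*} [Fintype ι]
    (F : ι → Finset (Fin n))
    (hFne : ∀ e : ι, (F e).Nonempty)
    (hunion : ∀ v : Fin n, ∃ e : ι, v ∈ F e)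
    (R : (e : ι) → Finset ((i : {x // x ∈ F e}) → Dom i.val))
    (Q : Finset (∀ i, Dom i))
    (hQ : ∀ a : ∀ i, Dom i, a ∈ Q ↔ ∀ e : ι, (fun i : {x // x ∈ F e} => a i.val) ∈ R e) :
    (Q.card : ℝ) ≤
      ((Finset.univ.sup (fun e : ι => (R e).card) : ℕ) : ℝ) ^
        (sInf {s : ℝ | ∃ δ : ι → ℝ, (∀ e, 0 ≤ δ e) ∧
          (∀ v : Fin n, 1 ≤ ∑ e ∈ Finset.univ.filter (fun e => v ∈ F e), δ e) ∧
          s = ∑ e : ι, δ e}) := by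
  classical
  set N : ℕ := Finset.univ.sup (fun e : ι => (R e).card) with hN
  set A : Set ℝ := {s : ℝ | ∃ δ : ι → ℝ, (∀ e, 0 ≤ δ e) ∧
      (∀ v : Fin n, 1 ≤ ∑ e ∈ Finset.univ.filter (fun e => v ∈ F e), δ e) ∧
      s = ∑ e : ι, δ e} with hA
  -- the set of cover weights is nonempty and bounded below
  have hA_ne : A.Nonempty := by
    refine ⟨∑ e : ι, (1 : ℝ), fun _ => 1, fun _ => zero_le_one, fun v => ?_, rfl⟩
    obtain ⟨e, he⟩ := hunion v
    have hmem : e ∈ Finset.univ.filter (fun e => v ∈ F e) := by simp [he]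
    have : 1 ≤ (Finset.univ.filter (fun e => v ∈ F e)).card := Finset.card_pos.mpr ⟨e, hmem⟩
    simpa using (by exact_mod_cast this : (1:ℝ) ≤ ((Finset.univ.filter (fun e => v ∈ F e)).card : ℝ))
  have hA_bdd : BddBelow A := by
    refine ⟨0, fun s hs => ?_⟩
    obtain ⟨δ, h0, _, rfl⟩ := hs
    exact Finset.sum_nonneg fun e _ => h0 e
  -- projections of Q are bounded by N
  have hproj : ∀ e : ι, (proj F e Finset.univ Q).card ≤ N := by
    intro e
    have h1 : proj F e Finset.univ Q =
        (Q.image (fun a (i : {x // x ∈ F e}) => a i.val)).image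
          (fun g (i : {x // x ∈ F e}) => some (g i)) := by
      rw [proj, Finset.image_image]
      apply Finset.image_congr
      intro a _
      funext i
      simp
    have h2 : Q.image (fun a (i : {x // x ∈ F e}) => a i.val) ⊆ R e := by
      intro g hg
      obtain ⟨a, ha, rfl⟩ := Finset.mem_image.mp hg
      exact (hQ a).mp ha e
    calc (proj F e Finset.univ Q).card
        ≤ (Q.image (fun a (i : {x // x ∈ F e}) => a i.val)).card := by
          rw [h1]; exact Finset.card_image_le
      _ ≤ (R e).card := Finset.card_le_card h2
      _ ≤ N := Finset.le_sup (f := fun e : ι => (R e).card) (Finset.mem_univ e)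
  -- the main estimate, for each fractional edge cover
  have hmain : ∀ s ∈ A, (Q.card : ℝ) ≤ (N : ℝ) ^ s := by
    rintro s ⟨δ, h0, hcov, rfl⟩
    have hdet : ∀ a ∈ Q, ∀ b ∈ Q, (∀ i ∈ (Finset.univ : Finset (Fin n)), a i = b i) → a = b :=
      fun a _ b _ h => funext fun i => h i (Finset.mem_univ i)
    have hkey := agm_key F δ h0 Finset.univ (fun v _ => hcov v) Q hdet
    have hbound : (Q.card : ℝ≥0∞) ≤ (N : ℝ≥0∞) ^ (∑ e : ι, δ e) := by
      calc (Q.card : ℝ≥0∞) ≤ ∏ e : ι, ((proj F e Finset.univ Q).card : ℝ≥0∞) ^ δ e := hkey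
        _ ≤ ∏ e : ι, (N : ℝ≥0∞) ^ δ e := by
            refine Finset.prod_le_prod' fun e _ => ?_
            exact ENNReal.rpow_le_rpow (by exact_mod_cast hproj e) (h0 e)
        _ = (N : ℝ≥0∞) ^ (∑ e : ι, δ e) := prod_rpow_const _ _ (fun e _ => h0 e)
    have hs0 : 0 ≤ ∑ e : ι, δ e := Finset.sum_nonneg fun e _ => h0 e
    have hfin : (N : ℝ≥0∞) ^ (∑ e : ι, δ e) ≠ ⊤ :=
      ENNReal.rpow_ne_top_of_nonneg hs0 (ENNReal.natCast_ne_top N)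
    have := ENNReal.toReal_mono hfin hbound
    rwa [ENNReal.toReal_natCast, ← ENNReal.toReal_rpow, ENNReal.toReal_natCast] at this
  -- pass to the infimum
  rcases Nat.eq_zero_or_pos N with hN0 | hN1
  · have hQe : Q = ∅ := by
      obtain ⟨e0, _⟩ := hunion ⟨0, hn⟩
      have hR : R e0 = ∅ := Finset.card_eq_zero.mp
        (Nat.le_zero.mp (hN0 ▸ Finset.le_sup (f := fun e : ι => (R e).card) (Finset.mem_univ e0)))
      refine Finset.eq_empty_of_forall_notMem fun a ha => ?_
      have := (hQ a).mp ha e0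
      simp [hR] at this
    rw [hQe, hN0]
    simpa using Real.rpow_nonneg (le_refl (0:ℝ)) _
  · have hNR : 1 ≤ (N : ℝ) := by exact_mod_cast hN1
    have hub : ∀ ε ∈ Set.Ioi (0:ℝ), (Q.card : ℝ) ≤ (N : ℝ) ^ (sInf A + ε) := by
      intro ε hε
      obtain ⟨s, hsA, hs⟩ := (csInf_lt_iff hA_bdd hA_ne).mp
        (lt_add_of_pos_right (sInf A) hε)
      exact (hmain s hsA).trans (Real.rpow_le_rpow_of_exponent_le hNR hs.le)
    have hcont : Filter.Tendsto (fun ε : ℝ => (N : ℝ) ^ (sInf A + ε)) (nhdsWithin 0 (Set.Ioi 0))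
        (nhds ((N : ℝ) ^ (sInf A))) := by
      have h1 : ContinuousAt (fun ε : ℝ => (N : ℝ) ^ (sInf A + ε)) 0 := by
        have hN0' : (N : ℝ) ≠ 0 := by positivity
        exact (Real.continuousAt_const_rpow hN0').comp
          ((continuous_add_left (sInf A)).continuousAt)
      have := h1.tendsto.mono_left (nhdsWithin_le_nhds (s := Set.Ioi (0:ℝ)))
      simpa using this
    exact ge_of_tendsto hcont (eventually_nhdsWithin_of_forall hub)
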